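/- Let ψ₁, …, ψ_N be a linearly independent family of unit vectors spanning ℂ^N, and let ω₁, …, ω_N be the biorthogonal family, i.e. ⟨ωᵢ, ψ_j⟩ = δ_ij for all i, j. Fix j ∈ {1,…,N}. If P is a positive semidefinite N×N complex matrix with ⟨ψᵢ, P ψᵢ⟩ = 0 for all i ≠ j, then there exists c ≥ 0 such that P = c · |ω_j⟩⟨ω_j|. -/

import Mathlib

open Matrix ComplexOrder

/-- If `ψ₁, …, ψ_N` is a linearly independent spanning family of unit vectors
of `ℂ^N` with biorthogonal family `ω₁, …, ω_N`, and `P ≥ 0` satisfies `⟨ψᵢ, Pψᵢ⟩ = 0` for all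
`i ≠ j`, then `P` is a nonnegative multiple of `|ω_j⟩⟨ω_j|`. -/
theorem unambiguous_povm_element_is_multiple_of_biorthogonal
    {N : ℕ} (ψ ω : Fin N → (Fin N → ℂ))
    (hli : LinearIndependent ℂ ψ)
    (hspan : Submodule.span ℂ (Set.range ψ) = ⊤)
    (hunit : ∀ i, star (ψ i) ⬝ᵥ ψ i = 1)
    (hbi : ∀ i j, star (ω i) ⬝ᵥ ψ j = if i = j then 1 else 0)
    (j : Fin N)
    (P : Matrix (Fin N) (Fin N) ℂ) (hP : P.PosSemidef)
    (hzero : ∀ i, i ≠ j → star (ψ i) ⬝ᵥ (P *ᵥ ψ i) = 0) :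
    ∃ c : ℝ, 0 ≤ c ∧ P = (c : ℂ) • vecMulVec (ω j) (star (ω j)) := by
  classical
  have hherm : Pᴴ = P := hP.1
  -- kernel facts
  have hker : ∀ i, i ≠ j → P *ᵥ ψ i = 0 := fun i hi =>
    (hP.dotProduct_mulVec_zero_iff (ψ i)).mp (hzero i hi)
  -- nondegeneracy: if ⟨ψ i, w⟩ = 0 for all i then w = 0
  have hnondeg : ∀ w : Fin N → ℂ, (∀ i, star (ψ i) ⬝ᵥ w = 0) → w = 0 := by
    intro w hw
    have hwmem : w ∈ Submodule.span ℂ (Set.range ψ) := by rw [hspan]; trivial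
    obtain ⟨c, hc⟩ := (Submodule.mem_span_range_iff_exists_fun ℂ).mp hwmem
    have hsum : ∀ g : Fin N → (Fin N → ℂ), (∑ x, g x) ⬝ᵥ w = ∑ x, g x ⬝ᵥ w := by
      intro g
      simp only [dotProduct, Finset.sum_apply, Finset.sum_mul]
      exact Finset.sum_comm
    have : star w ⬝ᵥ w = 0 := by
      nth_rewrite 1 [← hc]
      rw [star_sum]
      simp only [star_smul]
      rw [hsum]
      refine Finset.sum_eq_zero fun i _ => ?_
      rw [smul_dotProduct, hw i, smul_zero]
    exact dotProduct_star_self_eq_zero.mp this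
  set c' : ℂ := star (ψ j) ⬝ᵥ (P *ᵥ ψ j) with hc'def
  have hc'nonneg : 0 ≤ c' := hP.dotProduct_mulVec_nonneg (ψ j)
  obtain ⟨hre, him⟩ : 0 ≤ c'.re ∧ c'.im = 0 := by
    rw [Complex.le_def] at hc'nonneg
    constructor
    · simpa using hc'nonneg.1
    · simpa using hc'nonneg.2.symm
  refine ⟨c'.re, hre, ?_⟩
  have hc'eq : (c'.re : ℂ) = c' := by
    rw [Complex.ext_iff]; simp [him]
  -- ⟨ψ i, ω j⟩ = δ_{ji}
  have hpsiomega : ∀ i, star (ψ i) ⬝ᵥ ω j = if j = i then 1 else 0 := by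
    intro i
    have := congrArg star (hbi j i)
    rwa [star_dotProduct, star_star, apply_ite star, star_one, star_zero] at this
  -- P ψ j = c' • ω j
  have hPj : P *ᵥ ψ j = c' • ω j := by
    have key : ∀ i, star (ψ i) ⬝ᵥ (P *ᵥ ψ j - c' • ω j) = 0 := by
      intro i
      rw [dotProduct_sub, dotProduct_smul, hpsiomega i]
      by_cases hij : i = j
      · subst hij
        simp [hc'def]
      · have h1 : star (ψ i) ⬝ᵥ (P *ᵥ ψ j) = 0 := by
          rw [dotProduct_mulVec, ← hherm, ← star_mulVec, hker i hij, star_zero,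
            zero_dotProduct]
        rw [h1, if_neg (fun h => hij h.symm)]
        simp
    exact sub_eq_zero.mp (hnondeg _ key)
  -- final: matrices agree on the spanning family
  have hmulVec : ∀ i, P *ᵥ ψ i = ((c'.re : ℂ) • vecMulVec (ω j) (star (ω j))) *ᵥ ψ i := by
    intro i
    have hq : vecMulVec (ω j) (star (ω j)) *ᵥ ψ i = (star (ω j) ⬝ᵥ ψ i) • ω j := by
      ext k
      simp [vecMulVec, mulVec, dotProduct, Finset.mul_sum, mul_comm, mul_left_comm]
    rw [smul_mulVec, hq, hbi j i]
    by_cases hij : i = j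
    · subst hij; simp [hPj, hc'eq]
    · rw [hker i hij, if_neg (fun h => hij h.symm)]; simp
  have hlin : Matrix.toLin' P = Matrix.toLin' ((c'.re : ℂ) • vecMulVec (ω j) (star (ω j))) := by
    apply LinearMap.ext_on hspan
    rintro x ⟨i, rfl⟩
    simpa [Matrix.toLin'_apply] using hmulVec i
  exact Matrix.toLin'.injective hlin
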